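/- Let (P_t) be a uniformly integrable càdlàg martingale with terminal value P_∞ distributed according to μ (μ with finite first moment). Then for every y with 0 < y < r_μ, P(sup_t P_t ≥ y) ≤ inf_{K < y} C_μ(K)/(y − K) = μ^HL([y,∞)). (Blackwell–Dubins / Azéma–Yor maximal inequality.) -/

import Mathlib

open MeasureTheory Set Filter Topology
open scoped NNReal

/-- Tail function `μ([x,∞))`. -/
noncomputable def tailFn (μ : Measure ℝ) (x : ℝ) : ℝ := (μ (Ici x)).toReal

/-- Tail quantile function: left-continuous inverse of the tail function. -/
noncomputable def tailQ (μ : Measure ℝ) (l : ℝ) : ℝ := sInf {x : ℝ | tailFn μ x < l}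

/-- Call function `C_μ(K) = ∫ (s-K)⁺ μ(ds)`. -/
noncomputable def callFn (μ : Measure ℝ) (K : ℝ) : ℝ := ∫ s, max (s - K) 0 ∂μ

/-- Average Value at Risk at level `l`. -/
noncomputable def avar (μ : Measure ℝ) (l : ℝ) : ℝ := (1 / l) * ∫ u in (0 : ℝ)..l, tailQ μ u

/-- Hardy–Littlewood transform of `μ`: the law of `AVaR_μ(ξ)` for `ξ` uniform on `[0,1]`. -/
noncomputable def hlTransform (μ : Measure ℝ) : Measure ℝ :=
  Measure.map (avar μ) (volume.restrict (Ioc (0 : ℝ) 1))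

section part2
variable (μ : Measure ℝ) [IsProbabilityMeasure μ]

lemma tailFn_nonneg (x : ℝ) : 0 ≤ tailFn μ x := ENNReal.toReal_nonneg

lemma tailFn_anti : Antitone (tailFn μ) := fun a b hab =>
  ENNReal.toReal_mono (measure_ne_top μ _) (measure_mono (Ici_subset_Ici.2 hab))

lemma tailFn_lt_iff {x u : ℝ} (hu : 0 < u) : tailFn μ x < u ↔ μ (Ici x) < ENNReal.ofReal u := by
  rw [tailFn, ← ENNReal.ofReal_lt_ofReal_iff hu, ENNReal.ofReal_toReal (measure_ne_top μ _)]

lemma exists_tailFn_lt {u : ℝ} (hu : 0 < u) : ∃ x : ℝ, tailFn μ x < u := by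
  have h1 : Tendsto (fun n : ℕ => μ (Ici (n : ℝ))) atTop (𝓝 (μ (⋂ n : ℕ, Ici (n : ℝ)))) := by
    refine tendsto_measure_iInter_atTop (fun n => (measurableSet_Ici).nullMeasurableSet)
      (fun a b hab => Ici_subset_Ici.2 (by exact_mod_cast hab)) ⟨0, measure_ne_top μ _⟩
  have h2 : (⋂ n : ℕ, Ici ((n : ℝ))) = ∅ := by
    ext x; simp only [mem_iInter, mem_Ici, mem_empty_iff_false, iff_false, not_forall, not_le]
    obtain ⟨n, hn⟩ := exists_nat_gt x; exact ⟨n, hn⟩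
  rw [h2, measure_empty] at h1
  have := h1.eventually (eventually_lt_nhds (ENNReal.ofReal_pos.2 hu))
  obtain ⟨n, hn⟩ := this.exists
  exact ⟨n, (tailFn_lt_iff μ hu).2 hn⟩

lemma exists_lt_tailFn {u : ℝ} (hu : u < 1) : ∃ x : ℝ, u < tailFn μ x := by
  have h1 : Tendsto (fun n : ℕ => μ (Ici (-(n : ℝ)))) atTop (𝓝 (μ (⋃ n : ℕ, Ici (-(n : ℝ))))) := by
    refine tendsto_measure_iUnion_atTop (fun a b hab => Ici_subset_Ici.2 (by
      simp only [neg_le_neg_iff]; exact_mod_cast hab))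
  have h2 : (⋃ n : ℕ, Ici (-(n : ℝ))) = univ := by
    ext x; simp only [mem_iUnion, mem_Ici, mem_univ, iff_true]
    obtain ⟨n, hn⟩ := exists_nat_gt (-x); exact ⟨n, by linarith⟩
  rw [h2, measure_univ] at h1
  have := h1.eventually (eventually_gt_nhds (by
    simpa using ENNReal.ofReal_lt_one.2 hu : ENNReal.ofReal u < 1))
  obtain ⟨n, hn⟩ := this.exists
  refine ⟨-(n:ℝ), ?_⟩
  rcases lt_or_ge u 0 with h | h
  · exact lt_of_lt_of_le h (tailFn_nonneg μ _)
  · exact (ENNReal.ofReal_lt_iff_lt_toReal h (measure_ne_top μ _)).1 hn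


lemma tailQ_set_nonempty {u : ℝ} (hu : 0 < u) : {x : ℝ | tailFn μ x < u}.Nonempty :=
  exists_tailFn_lt μ hu

lemma tailQ_set_bddBelow {u : ℝ} (hu : u < 1) : BddBelow {x : ℝ | tailFn μ x < u} := by
  obtain ⟨x0, hx0⟩ := exists_lt_tailFn μ hu
  refine ⟨x0, fun z hz => ?_⟩
  by_contra h
  push_neg at h
  exact absurd (lt_of_le_of_lt (tailFn_anti μ h.le) hz) (not_lt.2 hx0.le)

lemma le_tailQ {u x : ℝ} (hu : 0 < u) (h : u ≤ tailFn μ x) : x ≤ tailQ μ u := by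
  refine le_csInf (tailQ_set_nonempty μ hu) (fun z hz => ?_)
  by_contra hc
  push_neg at hc
  exact absurd (lt_of_lt_of_le hz (h.trans (tailFn_anti μ hc.le))) (lt_irrefl _)

/-- Left continuity consequence of tail function. -/
lemma exists_lt_of_tailFn_lt {x u : ℝ} (h : tailFn μ x < u) : ∃ z < x, tailFn μ z < u := by
  have hu : 0 < u := lt_of_le_of_lt (tailFn_nonneg μ x) h
  have h1 : Tendsto (fun n : ℕ => μ (Ici (x - 1/(n+1)))) atTop (𝓝 (μ (⋂ n : ℕ, Ici (x - 1/(n+1))))) := by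
    refine tendsto_measure_iInter_atTop (fun n => measurableSet_Ici.nullMeasurableSet)
      (fun a b hab => Ici_subset_Ici.2 (by
        have : (1:ℝ)/(b+1) ≤ 1/(a+1) := by
          apply one_div_le_one_div_of_le <;> [positivity; (have := (Nat.cast_le (α := ℝ)).2 hab; linarith)]
        linarith)) ⟨0, measure_ne_top μ _⟩
  have h2 : (⋂ n : ℕ, Ici (x - 1/((n:ℝ)+1))) = Ici x := by
    ext s
    simp only [mem_iInter, mem_Ici]
    constructor
    · intro hs
      by_contra hc
      push_neg at hc
      obtain ⟨n, hn⟩ := exists_nat_gt (1/(x - s))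
      have hxs : 0 < x - s := by linarith
      have h3 : 1/((n:ℝ)+1) < x - s := by
        rw [div_lt_iff₀ (by positivity)]
        rw [div_lt_iff₀ hxs] at hn
        nlinarith [hxs]
      have := hs n
      linarith
    · intro hs n
      have : (0:ℝ) < 1/((n:ℝ)+1) := by positivity
      linarith
  rw [h2] at h1
  have := h1.eventually (eventually_lt_nhds ((tailFn_lt_iff μ hu).1 h))
  obtain ⟨n, hn⟩ := this.exists
  refine ⟨x - 1/((n:ℝ)+1), ?_, (tailFn_lt_iff μ hu).2 hn⟩
  have : (0:ℝ) < 1/((n:ℝ)+1) := by positivity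
  linarith

lemma tailQ_lt {u x : ℝ} (hu : u < 1) (h : tailFn μ x < u) : tailQ μ u < x := by
  obtain ⟨z, hzx, hz⟩ := exists_lt_of_tailFn_lt μ h
  exact lt_of_le_of_lt (csInf_le (tailQ_set_bddBelow μ hu) hz) hzx

lemma tailQ_antitoneOn : AntitoneOn (tailQ μ) (Ioo 0 1) := by
  intro u hu v hv huv
  exact csInf_le_csInf (tailQ_set_bddBelow μ hv.2) (tailQ_set_nonempty μ hu.1)
    (fun z hz => lt_of_lt_of_le hz huv)

lemma tailQ_aemeasurable : AEMeasurable (tailQ μ) (volume.restrict (Ioc (0:ℝ) 1)) := by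
  rw [Measure.restrict_congr_set Ioo_ae_eq_Ioc.symm]
  exact aemeasurable_restrict_of_antitoneOn measurableSet_Ioo (tailQ_antitoneOn μ)

/-- The transport theorem: the tail quantile pushes uniform measure to μ. -/
lemma tailQ_map : Measure.map (tailQ μ) (volume.restrict (Ioc (0:ℝ) 1)) = μ := by
  have hfin : IsFiniteMeasure (Measure.map (tailQ μ) (volume.restrict (Ioc (0:ℝ) 1))) := by
    constructor
    rw [Measure.map_apply_of_aemeasurable (tailQ_aemeasurable μ) MeasurableSet.univ]
    exact lt_of_le_of_lt (measure_mono (subset_univ _)) (by simp [Real.volume_Ioc])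
  refine Measure.ext_of_Ici _ _ (fun x => ?_)
  rw [Measure.map_apply_of_aemeasurable (tailQ_aemeasurable μ) measurableSet_Ici,
    Measure.restrict_apply' measurableSet_Ioc]
  have hsub1 : Ioc 0 (tailFn μ x) ⊆ tailQ μ ⁻¹' Ici x ∩ Ioc 0 1 := by
    intro u hu
    exact ⟨le_tailQ μ hu.1 hu.2, hu.1, hu.2.trans (by
      have := measure_mono (subset_univ (Ici x)) (μ := μ)
      rw [measure_univ] at this
      simpa [tailFn] using ENNReal.toReal_mono (by simp) this)⟩
  have hsub2 : tailQ μ ⁻¹' Ici x ∩ Ioc 0 1 ⊆ Ioc 0 (tailFn μ x) ∪ {1} := by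
    rintro u ⟨hQ, hu0, hu1⟩
    rcases eq_or_lt_of_le hu1 with h1 | h1
    · exact Or.inr (by simp [h1])
    · left
      refine ⟨hu0, ?_⟩
      by_contra hc
      push_neg at hc
      exact absurd (tailQ_lt μ h1 hc) (not_lt.2 hQ)
  refine le_antisymm ?_ ?_
  · refine le_trans (measure_mono hsub2) ?_
    refine le_trans (measure_union_le _ _) ?_
    simp only [Real.volume_singleton, add_zero, Real.volume_Ioc, sub_zero, tailFn]
    rw [ENNReal.ofReal_toReal (measure_ne_top μ _)]
  · refine le_trans ?_ (measure_mono hsub1)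
    simp only [Real.volume_Ioc, sub_zero, tailFn]
    rw [ENNReal.ofReal_toReal (measure_ne_top μ _)]


lemma tailQ_integrable (hμ : Integrable id μ) : Integrable (tailQ μ) (volume.restrict (Ioc (0:ℝ) 1)) := by
  have := (integrable_map_measure (f := tailQ μ) (g := id)
    aestronglyMeasurable_id (tailQ_aemeasurable μ)).1 (by rw [tailQ_map μ]; exact hμ)
  simpa [Function.comp] using this

lemma callFn_rep (K : ℝ) :
    callFn μ K = ∫ u in Ioc (0:ℝ) 1, max (tailQ μ u - K) 0 := by
  have h := integral_map (φ := tailQ μ) (f := fun s => max (s - K) 0) (tailQ_aemeasurable μ)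
    (((continuous_id.sub continuous_const).max continuous_const).aestronglyMeasurable)
  rw [tailQ_map μ] at h
  rw [callFn, h]

lemma callFn_nonneg (K : ℝ) : 0 ≤ callFn μ K :=
  integral_nonneg fun s => le_max_right _ _

lemma volume_Ioc_toReal {a b : ℝ} (h : a ≤ b) : (volume (Ioc a b)).toReal = b - a := by
  rw [Real.volume_Ioc, ENNReal.toReal_ofReal (by linarith)]

lemma ae_ne_one : ∀ᵐ u : ℝ, u ≠ (1:ℝ) := by
  rw [ae_iff]
  simpa using Real.volume_singleton (x := (1:ℝ))

/-- key inequality: `G(l) - l K ≤ C(K)` -/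
lemma key_ineq (hμ : Integrable id μ) (K : ℝ) {l : ℝ} (hl : l ∈ Ioc (0:ℝ) 1) :
    (∫ u in Ioc (0:ℝ) l, tailQ μ u) - l * K ≤ callFn μ K := by
  have hQint : IntegrableOn (tailQ μ) (Ioc (0:ℝ) l) volume :=
    (tailQ_integrable μ hμ).mono_measure
      (Measure.restrict_mono (Ioc_subset_Ioc_right hl.2) le_rfl)
  have hint2 : IntegrableOn (fun u => tailQ μ u - K) (Ioc (0:ℝ) l) volume :=
    hQint.sub (integrableOn_const (by simp [Real.volume_Ioc]))
  have hint3 : IntegrableOn (fun u => max (tailQ μ u - K) 0) (Ioc (0:ℝ) 1) volume :=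
    ((tailQ_integrable μ hμ).sub (integrableOn_const (by
      simp [Real.volume_Ioc]))).pos_part
  have step1 : (∫ u in Ioc (0:ℝ) l, tailQ μ u) - l * K
      = ∫ u in Ioc (0:ℝ) l, (tailQ μ u - K) := by
    rw [integral_sub hQint (integrableOn_const (by simp [Real.volume_Ioc]))]
    rw [setIntegral_const, smul_eq_mul, measureReal_def, volume_Ioc_toReal (by linarith [hl.1]), sub_zero,
      mul_comm]
  rw [step1, callFn_rep μ K]
  refine le_trans (setIntegral_mono_on hint2
    (hint3.mono_set (Ioc_subset_Ioc_right hl.2)) measurableSet_Ioc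
    (fun u _ => le_max_left _ _)) ?_
  refine setIntegral_mono_set hint3 ?_ ?_
  · exact Eventually.of_forall fun u => le_max_right _ _
  · exact HasSubset.Subset.eventuallyLE (Ioc_subset_Ioc_right hl.2)

/-- key equality at `K = tailQ μ l` -/
lemma key_eq (hμ : Integrable id μ) {l : ℝ} (hl : l ∈ Ioo (0:ℝ) 1) :
    callFn μ (tailQ μ l) = (∫ u in Ioc (0:ℝ) l, tailQ μ u) - l * tailQ μ l := by
  set K := tailQ μ l with hK
  have hsplit : Ioc (0:ℝ) 1 = Ioc 0 l ∪ Ioc l 1 := (Ioc_union_Ioc_eq_Ioc hl.1.le hl.2.le).symm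
  have hQint : IntegrableOn (fun u => max (tailQ μ u - K) 0) (Ioc (0:ℝ) 1) volume :=
    ((tailQ_integrable μ hμ).sub (integrableOn_const (by
      simp [Real.volume_Ioc]))).pos_part
  rw [callFn_rep μ K, hsplit, setIntegral_union (by
      rw [Set.disjoint_left]; rintro a ⟨h1, h2⟩ ⟨h3, h4⟩; exact absurd h2 (not_le.2 h3))
    measurableSet_Ioc (hQint.mono_set (hsplit ▸ subset_union_left))
    (hQint.mono_set (hsplit ▸ subset_union_right))]
  have h1 : ∫ u in Ioc (0:ℝ) l, max (tailQ μ u - K) 0 = ∫ u in Ioc (0:ℝ) l, (tailQ μ u - K) := by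
    refine setIntegral_congr_ae measurableSet_Ioc (Eventually.of_forall fun u hu => ?_)
    refine max_eq_left (sub_nonneg.2 ?_)
    exact tailQ_antitoneOn μ ⟨hu.1, lt_of_le_of_lt hu.2 hl.2⟩ hl hu.2
  have h2 : ∫ u in Ioc l 1, max (tailQ μ u - K) 0 = 0 := by
    have e : ∫ u in Ioc l 1, max (tailQ μ u - K) 0 = ∫ u in Ioc l (1:ℝ), (0:ℝ) := by
      refine setIntegral_congr_ae measurableSet_Ioc ?_
      filter_upwards [ae_ne_one] with u hu1 hu
      refine max_eq_right (sub_nonpos.2 ?_)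
      exact tailQ_antitoneOn μ hl ⟨lt_trans hl.1 hu.1, lt_of_le_of_ne hu.2 hu1⟩ hu.1.le
    rw [e]; simp
  rw [h1, h2, add_zero, integral_sub ((tailQ_integrable μ hμ).mono_measure
      (Measure.restrict_mono (Ioc_subset_Ioc_right hl.2.le) le_rfl))
    (integrableOn_const (by simp [Real.volume_Ioc]))]
  rw [setIntegral_const, smul_eq_mul, measureReal_def, volume_Ioc_toReal hl.1.le, sub_zero, mul_comm]


lemma avar_Ioc {l : ℝ} (hl : 0 < l) :
    avar μ l = (1/l) * ∫ u in Ioc (0:ℝ) l, tailQ μ u := by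
  rw [avar, intervalIntegral.integral_of_le hl.le]

/-- `l * Q(l) ≤ G(l)` for `l ∈ (0,1)`. -/
lemma G_lower (hμ : Integrable id μ) {l : ℝ} (hl : l ∈ Ioo (0:ℝ) 1) :
    l * tailQ μ l ≤ ∫ u in Ioc (0:ℝ) l, tailQ μ u := by
  have hQint : IntegrableOn (tailQ μ) (Ioc (0:ℝ) l) volume :=
    (tailQ_integrable μ hμ).mono_measure
      (Measure.restrict_mono (Ioc_subset_Ioc_right hl.2.le) le_rfl)
  have : ∫ u in Ioc (0:ℝ) l, tailQ μ l ≤ ∫ u in Ioc (0:ℝ) l, tailQ μ u := by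
    refine setIntegral_mono_on (integrableOn_const (by simp [Real.volume_Ioc]))
      hQint measurableSet_Ioc (fun u hu => ?_)
    exact tailQ_antitoneOn μ ⟨hu.1, lt_of_le_of_lt hu.2 hl.2⟩ hl hu.2
  rw [setIntegral_const, smul_eq_mul, measureReal_def, volume_Ioc_toReal hl.1.le, sub_zero] at this
  exact this

lemma avar_antitoneOn (hμ : Integrable id μ) : AntitoneOn (avar μ) (Ioc (0:ℝ) 1) := by
  intro l' hl' l hl hle
  rcases eq_or_lt_of_le hle with rfl | hlt
  · exact le_rfl
  have hl'1 : l' ∈ Ioo (0:ℝ) 1 := ⟨hl'.1, lt_of_lt_of_le hlt hl.2⟩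
  have hsplit : Ioc (0:ℝ) l = Ioc 0 l' ∪ Ioc l' l := (Ioc_union_Ioc_eq_Ioc hl'.1.le hlt.le).symm
  have hQint : IntegrableOn (tailQ μ) (Ioc (0:ℝ) l) volume :=
    (tailQ_integrable μ hμ).mono_measure
      (Measure.restrict_mono (Ioc_subset_Ioc_right hl.2) le_rfl)
  have hG : ∫ u in Ioc (0:ℝ) l, tailQ μ u
      = (∫ u in Ioc (0:ℝ) l', tailQ μ u) + ∫ u in Ioc l' l, tailQ μ u := by
    rw [hsplit, setIntegral_union (by
        rw [Set.disjoint_left]; rintro a ⟨h1, h2⟩ ⟨h3, h4⟩; exact absurd h2 (not_le.2 h3))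
      measurableSet_Ioc (hQint.mono_set (hsplit ▸ subset_union_left))
      (hQint.mono_set (hsplit ▸ subset_union_right))]
  have hI : ∫ u in Ioc l' l, tailQ μ u ≤ (l - l') * tailQ μ l' := by
    have : ∫ u in Ioc l' l, tailQ μ u ≤ ∫ u in Ioc l' l, tailQ μ l' := by
      refine setIntegral_mono_ae_restrict (hQint.mono_set (hsplit ▸ subset_union_right))
        (integrableOn_const (by simp [Real.volume_Ioc])) ?_
      refine (ae_restrict_iff' measurableSet_Ioc).2 ?_
      filter_upwards [ae_ne_one] with u hu1 hu
      exact tailQ_antitoneOn μ hl'1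
        ⟨lt_trans hl'.1 hu.1, lt_of_le_of_ne (hu.2.trans hl.2) hu1⟩ hu.1.le
    rwa [setIntegral_const, smul_eq_mul, measureReal_def, volume_Ioc_toReal hlt.le] at this
  have hG2 := G_lower μ hμ hl'1
  rw [avar_Ioc μ hl.1, avar_Ioc μ hl'.1]
  rw [div_mul_eq_mul_div, div_mul_eq_mul_div, div_le_div_iff₀ hl.1 hl'.1]
  nlinarith [hl.1, hl'.1, hlt]

lemma avar_aemeasurable (hμ : Integrable id μ) :
    AEMeasurable (avar μ) (volume.restrict (Ioc (0:ℝ) 1)) :=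
  aemeasurable_restrict_of_antitoneOn measurableSet_Ioc (avar_antitoneOn μ hμ)

/-- Main part 2 identity. -/
lemma part2_eq (hμ : Integrable id μ) (y : ℝ) (hy : 0 < y) :
    (⨅ K : Iio y, callFn μ (K : ℝ) / (y - (K : ℝ))) = (hlTransform μ (Ici y)).toReal := by
  haveI : Nonempty (Iio y) := ⟨⟨y - 1, by simp⟩⟩
  have hbdd : BddBelow (range fun K : Iio y => callFn μ (K : ℝ) / (y - (K : ℝ))) := by
    refine ⟨0, ?_⟩
    rintro _ ⟨⟨K, hK⟩, rfl⟩
    exact div_nonneg (callFn_nonneg μ _) (by simp only [mem_Iio] at hK; linarith)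
  set S : Set ℝ := {u : ℝ | y ≤ avar μ u} ∩ Ioc 0 1 with hS
  have hlval : hlTransform μ (Ici y) = volume S := by
    rw [hlTransform, Measure.map_apply_of_aemeasurable (avar_aemeasurable μ hμ) measurableSet_Ici,
      Measure.restrict_apply' measurableSet_Ioc]
    rfl
  have hSsub : S ⊆ Ioc 0 1 := inter_subset_right
  have hfin : volume S ≠ ⊤ := by
    refine ne_top_of_le_ne_top ?_ (measure_mono hSsub)
    simp [Real.volume_Ioc]
  set L : ℝ := (volume S).toReal with hLdef
  have hvolS : volume S = ENNReal.ofReal L := (ENNReal.ofReal_toReal hfin).symm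
  have hL0 : 0 ≤ L := ENNReal.toReal_nonneg
  have hL1 : L ≤ 1 := by
    have := measure_mono (μ := volume) hSsub
    rw [Real.volume_Ioc] at this
    calc L ≤ (ENNReal.ofReal (1 - 0 : ℝ)).toReal := ENNReal.toReal_mono (by simp) this
    _ = 1 := by norm_num
  have hdown : ∀ u ∈ S, ∀ v : ℝ, 0 < v → v ≤ u → v ∈ S := by
    rintro u ⟨hyu, hu⟩ v hv0 hvu
    have hvIoc : v ∈ Ioc (0:ℝ) 1 := ⟨hv0, hvu.trans hu.2⟩
    exact ⟨le_trans hyu (avar_antitoneOn μ hμ hvIoc hu hvu), hvIoc⟩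
  have hIooL : Ioo 0 L ⊆ S := by
    intro v hv
    by_contra hvS
    have hsub : S ⊆ Ioc 0 v := by
      intro u hu
      rcases le_or_gt u v with h | h
      · exact ⟨hu.2.1, h⟩
      · exact absurd (hdown u hu v hv.1 h.le) hvS
    have := measure_mono (μ := volume) hsub
    rw [hvolS, Real.volume_Ioc, sub_zero] at this
    have := (ENNReal.ofReal_le_ofReal_iff hv.1.le).1 this
    linarith [hv.2]
  have hSL : ∀ u ∈ S, u ≤ L := by
    intro u hu
    have hsub : Ioc 0 u ⊆ S := fun v hv => hdown u hu v hv.1 hv.2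
    have := measure_mono (μ := volume) hsub
    rw [hvolS, Real.volume_Ioc, sub_zero] at this
    exact (ENNReal.ofReal_le_ofReal_iff hL0).1 this
  rw [hlval, ← hLdef]
  refine le_antisymm ?_ ?_
  · -- iInf ≤ L
    refine le_of_forall_pos_le_add (fun ε hε => ?_)
    rcases lt_or_ge L 1 with hL1' | hL1'
    · obtain ⟨l, hlL, hl2⟩ := exists_between (lt_min hL1' (lt_add_of_pos_right L hε))
      have hl1 : l < 1 := lt_of_lt_of_le hl2 (min_le_left _ _)
      have hlε : l < L + ε := lt_of_lt_of_le hl2 (min_le_right _ _)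
      have hl0 : 0 < l := lt_of_le_of_lt hL0 hlL
      have hlIoo : l ∈ Ioo (0:ℝ) 1 := ⟨hl0, hl1⟩
      have hlS : l ∉ S := fun h => absurd (hSL l h) (not_le.2 hlL)
      have havarl : avar μ l < y := by
        by_contra hc
        exact hlS ⟨not_lt.1 hc, hl0, hl1.le⟩
      have hGl : (∫ u in Ioc (0:ℝ) l, tailQ μ u) < l * y := by
        rw [avar_Ioc μ hl0] at havarl
        calc (∫ u in Ioc (0:ℝ) l, tailQ μ u)
            = l * ((1/l) * ∫ u in Ioc (0:ℝ) l, tailQ μ u) := by field_simp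
        _ < l * y := by exact mul_lt_mul_of_pos_left havarl hl0
      have hQl : tailQ μ l < y := by
        have := G_lower μ hμ hlIoo
        nlinarith
      have hC : callFn μ (tailQ μ l) < l * (y - tailQ μ l) := by
        rw [key_eq μ hμ hlIoo]
        nlinarith
      refine le_trans (ciInf_le hbdd ⟨tailQ μ l, mem_Iio.2 hQl⟩) ?_
      have h1 : callFn μ (tailQ μ l) / (y - tailQ μ l) < l :=
        (div_lt_iff₀ (by linarith)).2 (by linarith [hC])
      linarith
    · -- L = 1 case : take K very negative
      have hL : L = 1 := le_antisymm hL1 hL1'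
      set E1 : ℝ := ∫ s, |s| ∂μ with hE1
      set K : ℝ := min 0 (y - (E1 - y)/ε) - 1 with hK
      have hKy : K < y := by
        have : K ≤ -1 := by simp only [hK]; have := min_le_left (0:ℝ) (y - (E1 - y)/ε); linarith
        linarith
      have hK0 : K ≤ 0 := by
        have : K ≤ -1 := by simp only [hK]; have := min_le_left (0:ℝ) (y - (E1 - y)/ε); linarith
        linarith
      have hyK : (E1 - y)/ε ≤ y - K := by
        have := min_le_right (0:ℝ) (y - (E1 - y)/ε)
        simp only [hK]; linarith
      have hIdμ : Integrable (fun s : ℝ => s) μ := hμ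
      have hCle : callFn μ K ≤ E1 - K := by
        rw [callFn, hE1]
        have : ∫ s, (|s| - K) ∂μ = E1 - K := by
          rw [integral_sub hIdμ.abs (integrable_const K)]
          simp [hE1]
        rw [← this]
        refine integral_mono ((hIdμ.sub (integrable_const K)).pos_part)
          (hIdμ.abs.sub (integrable_const K)) (fun s => ?_)
        rcases le_total (s - K) 0 with h | h
        · simp only [max_eq_right h]
          have : (0:ℝ) ≤ |s| := abs_nonneg s
          linarith
        · simp only [max_eq_left h]
          have : s ≤ |s| := le_abs_self s
          linarith
      have hEy : E1 - y ≤ ε * (y - K) := by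
        rcases le_total (E1 - y) 0 with h | h
        · have : 0 < y - K := by linarith
          nlinarith
        · calc E1 - y = ε * ((E1 - y)/ε) := by field_simp
          _ ≤ ε * (y - K) := mul_le_mul_of_nonneg_left hyK hε.le
      refine le_trans (ciInf_le hbdd ⟨K, mem_Iio.2 hKy⟩) ?_
      have hyK0 : 0 < y - K := by linarith
      rw [hL]
      calc callFn μ K / (y - K) ≤ (E1 - K) / (y - K) := by gcongr
      _ ≤ 1 + ε := by rw [div_le_iff₀ hyK0]; nlinarith
  · -- L ≤ iInf
    refine le_ciInf (fun ⟨K, hK⟩ => ?_)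
    simp only [mem_Iio] at hK
    rw [le_div_iff₀ (by linarith : (0:ℝ) < y - K)]
    by_contra hc
    push_neg at hc
    have hv0 : 0 ≤ callFn μ K / (y - K) :=
      div_nonneg (callFn_nonneg μ _) (by linarith)
    have hvL : callFn μ K / (y - K) < L := by
      rw [div_lt_iff₀ (by linarith : (0:ℝ) < y - K)]; linarith
    obtain ⟨v, hv1, hv2⟩ := exists_between hvL
    have hvpos : 0 < v := lt_of_le_of_lt hv0 hv1
    have hvS : v ∈ S := hIooL ⟨hvpos, hv2⟩
    have hyv : y ≤ avar μ v := hvS.1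
    have hGv : v * y ≤ ∫ u in Ioc (0:ℝ) v, tailQ μ u := by
      rw [avar_Ioc μ hvpos] at hyv
      calc v * y ≤ v * ((1/v) * ∫ u in Ioc (0:ℝ) v, tailQ μ u) :=
            mul_le_mul_of_nonneg_left hyv hvpos.le
      _ = ∫ u in Ioc (0:ℝ) v, tailQ μ u := by field_simp
    have hki := key_ineq μ hμ K (l := v) ⟨hvpos, hvS.2.2⟩
    have : v * (y - K) ≤ callFn μ K := by nlinarith
    have : v ≤ callFn μ K / (y - K) := (le_div_iff₀ (by linarith)).2 (by linarith)
    linarith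

end part2





section part1
variable {Ω : Type*} {m : MeasurableSpace Ω} {ℙ : Measure Ω} [IsProbabilityMeasure ℙ]

/-- Finite-time maximal inequality via first-entry decomposition. -/
lemma finite_step (𝒢 : Filtration ℝ≥0 m) (P : ℝ≥0 → Ω → ℝ)
    (hadapt : ∀ t, StronglyMeasurable[𝒢 t] (P t))
    (h : Ω → ℝ) (hint : Integrable h ℙ) (hh0 : 0 ≤ᵐ[ℙ] h)
    (y' c : ℝ) (hc : 0 ≤ c)
    (hcond : ∀ t : ℝ≥0, ∀ᵐ ω ∂ℙ, y' < P t ω → c ≤ (ℙ[h | 𝒢 t]) ω)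
    (S : Finset ℝ≥0) :
    c * (ℙ (⋃ t ∈ S, {ω | y' < P t ω})).toReal ≤ ∫ ω, h ω ∂ℙ := by
  classical
  set B : ℝ≥0 → Set Ω := fun t =>
    {ω | y' < P t ω} ∩ ⋂ s ∈ S.filter (· < t), {ω | P s ω ≤ y'} with hB
  have hBmeas𝒢 : ∀ t, MeasurableSet[𝒢 t] (B t) := by
    intro t
    refine MeasurableSet.inter ?_ ?_
    · exact (hadapt t).measurable measurableSet_Ioi
    · refine Finset.measurableSet_biInter _ (fun s hs => ?_)
      have hst : s ≤ t := (Finset.mem_filter.1 hs).2.le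
      exact 𝒢.mono hst _ ((hadapt s).measurable measurableSet_Iic)
  have hBmeas : ∀ t, MeasurableSet (B t) := fun t => 𝒢.le t _ (hBmeas𝒢 t)
  have hkey : ∀ s t : ℝ≥0, s ∈ S → s < t → Disjoint (B s) (B t) := by
    intro s t hs hlt
    rw [Set.disjoint_left]
    rintro ω ⟨hω1, -⟩ ⟨-, hω2⟩
    have hmem : s ∈ S.filter (· < t) := Finset.mem_filter.2 ⟨hs, hlt⟩
    have h2 : ω ∈ {ω | P s ω ≤ y'} := (Set.mem_iInter₂.1 hω2) s hmem
    simp only [mem_setOf_eq] at hω1 h2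
    linarith
  have hdisj : (↑S : Set ℝ≥0).PairwiseDisjoint B := by
    intro s hs t ht hst
    rcases hst.lt_or_gt with hlt | hlt
    · exact hkey s t hs hlt
    · exact (hkey t s ht hlt).symm
  have hcover : (⋃ t ∈ S, {ω | y' < P t ω}) = ⋃ t ∈ S, B t := by
    refine subset_antisymm ?_ (iUnion₂_mono fun t _ => inter_subset_left)
    intro ω hω
    rw [mem_iUnion₂] at hω
    obtain ⟨t, htS, hωt⟩ := hω
    set T := S.filter (fun s => y' < P s ω) with hT
    have hTne : T.Nonempty := ⟨t, Finset.mem_filter.2 ⟨htS, hωt⟩⟩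
    set t0 := T.min' hTne with ht0
    have ht0T := T.min'_mem hTne
    refine mem_iUnion₂.2 ⟨t0, (Finset.mem_filter.1 ht0T).1, (Finset.mem_filter.1 ht0T).2, ?_⟩
    refine Set.mem_iInter₂.2 (fun s hs => ?_)
    have hsS := (Finset.mem_filter.1 hs).1
    have hslt := (Finset.mem_filter.1 hs).2
    by_contra hcon
    simp only [mem_setOf_eq, not_le] at hcon
    exact absurd (T.min'_le s (Finset.mem_filter.2 ⟨hsS, hcon⟩)) (not_le.2 hslt)
  have hpiece : ∀ t ∈ S, c * (ℙ (B t)).toReal ≤ ∫ ω in B t, h ω ∂ℙ := by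
    intro t _
    have e1 : ∫ ω in B t, h ω ∂ℙ = ∫ ω in B t, (ℙ[h | 𝒢 t]) ω ∂ℙ :=
      (setIntegral_condExp (𝒢.le t) hint (hBmeas𝒢 t)).symm
    have e2 : ∫ ω in B t, (c : ℝ) ∂ℙ ≤ ∫ ω in B t, (ℙ[h | 𝒢 t]) ω ∂ℙ := by
      refine setIntegral_mono_ae_restrict (integrableOn_const (measure_ne_top ℙ _))
        integrable_condExp.integrableOn ?_
      refine (ae_restrict_iff' (hBmeas t)).2 ?_
      filter_upwards [hcond t] with ω hω hmem
      exact hω hmem.1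
    rw [setIntegral_const, smul_eq_mul] at e2
    rw [e1]
    calc c * (ℙ (B t)).toReal = (ℙ (B t)).toReal * c := mul_comm _ _
    _ ≤ _ := e2
  have hsum : ℙ (⋃ t ∈ S, B t) = ∑ t ∈ S, ℙ (B t) :=
    measure_biUnion_finset hdisj (fun t _ => hBmeas t)
  have hintB : ∀ t ∈ S, IntegrableOn h (B t) ℙ := fun t _ => hint.integrableOn
  have hsplit : ∫ ω in ⋃ t ∈ S, B t, h ω ∂ℙ = ∑ t ∈ S, ∫ ω in B t, h ω ∂ℙ :=
    integral_biUnion_finset S (fun t _ => hBmeas t) hdisj hintB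
  rw [hcover, hsum, ENNReal.toReal_sum (fun t _ => measure_ne_top ℙ _), Finset.mul_sum]
  calc ∑ t ∈ S, c * (ℙ (B t)).toReal ≤ ∑ t ∈ S, ∫ ω in B t, h ω ∂ℙ :=
        Finset.sum_le_sum hpiece
  _ = ∫ ω in ⋃ t ∈ S, B t, h ω ∂ℙ := hsplit.symm
  _ ≤ ∫ ω, h ω ∂ℙ := setIntegral_le_integral hint hh0

end part1


theorem stmt_17 {Ω : Type*} {m : MeasurableSpace Ω} {ℙ : Measure Ω}
    [IsProbabilityMeasure ℙ] (𝒢 : Filtration ℝ≥0 m) (P : ℝ≥0 → Ω → ℝ)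
    (hmart : Martingale P 𝒢 ℙ)
    (hrc : ∀ ω, ∀ t : ℝ≥0, ContinuousWithinAt (fun s => P s ω) (Ici t) t)
    (hll : ∀ ω, ∀ t : ℝ≥0, 0 < t → ∃ l : ℝ,
      Tendsto (fun s => P s ω) (nhdsWithin t (Iio t)) (nhds l))
    (hUI : UniformIntegrable P 1 ℙ)
    (Pinf : Ω → ℝ) (hPinf : ∀ᵐ ω ∂ℙ, Tendsto (fun t => P t ω) atTop (nhds (Pinf ω)))
    (hclosed : ∀ t : ℝ≥0, P t =ᵐ[ℙ] ℙ[Pinf | 𝒢 t])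
    (μ : Measure ℝ) [IsProbabilityMeasure μ] (hμ : Integrable id μ)
    (hlaw : Measure.map Pinf ℙ = μ) :
    ∀ y : ℝ, 0 < y → 0 < μ (Ioi y) →
      ℙ {ω | y ≤ ⨆ t : ℝ≥0, P t ω} ≤
        ENNReal.ofReal (⨅ K : Iio y, callFn μ (K : ℝ) / (y - (K : ℝ))) ∧
      ⨅ K : Iio y, callFn μ (K : ℝ) / (y - (K : ℝ)) = (hlTransform μ (Ici y)).toReal := by
  intro y hy hμy
  have hPn : ∀ n : ℕ, AEMeasurable (P n) ℙ := fun n =>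
    ((hmart.stronglyAdapted n).mono (𝒢.le n)).measurable.aemeasurable
  have hPtend : ∀ᵐ ω ∂ℙ, Tendsto (fun n : ℕ => P n ω) atTop (𝓝 (Pinf ω)) :=
    hPinf.mono fun ω h => h.comp tendsto_natCast_atTop_atTop
  have hPinf_aem : AEMeasurable Pinf ℙ :=
    aemeasurable_of_tendsto_metrizable_ae atTop hPn hPtend
  have hPinf_int : Integrable Pinf ℙ := by
    have := (integrable_map_measure aestronglyMeasurable_id hPinf_aem).1
      (by rw [hlaw]; exact hμ)
    simpa [Function.comp] using this
  haveI : Nonempty (Iio y) := ⟨⟨y - 1, by simp⟩⟩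
  refine ⟨?_, part2_eq μ hμ y hy⟩
  set A := {ω | y ≤ ⨆ t : ℝ≥0, P t ω} with hA
  have hmain : ∀ K : ℝ, K < y → (ℙ A).toReal ≤ callFn μ K / (y - K) := by
    intro K hKy
    set h : Ω → ℝ := fun ω => max (Pinf ω - K) 0 with hh
    have hint : Integrable h ℙ := (hPinf_int.sub (integrable_const K)).pos_part
    have hh0 : 0 ≤ᵐ[ℙ] h := Eventually.of_forall fun ω => le_max_right _ _
    have hcall : ∫ ω, h ω ∂ℙ = callFn μ K := by
      have him := integral_map (φ := Pinf) (f := fun s => max (s - K) 0) hPinf_aem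
        (((continuous_id.sub continuous_const).max continuous_const).aestronglyMeasurable)
      rw [hlaw] at him
      rw [callFn, him]
    have hcond : ∀ t : ℝ≥0, ∀ᵐ ω ∂ℙ, max (P t ω - K) 0 ≤ (ℙ[h | 𝒢 t]) ω := by
      intro t
      have e0 : ℙ[Pinf - (fun _ => K) | 𝒢 t]
          =ᵐ[ℙ] ℙ[Pinf | 𝒢 t] - ℙ[(fun _ => K : Ω → ℝ) | 𝒢 t] :=
        condExp_sub hPinf_int (integrable_const K) _
      have e0' : ℙ[(fun _ => K : Ω → ℝ) | 𝒢 t] = fun _ => K := condExp_const (𝒢.le t) K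
      have e2 : ℙ[Pinf - (fun _ => K) | 𝒢 t] ≤ᵐ[ℙ] ℙ[h | 𝒢 t] :=
        condExp_mono (hPinf_int.sub (integrable_const K)) hint
          (Eventually.of_forall fun ω => by
            simp only [Pi.sub_apply, hh]
            exact le_max_left _ _)
      have e3 : (0 : Ω → ℝ) ≤ᵐ[ℙ] ℙ[h | 𝒢 t] := condExp_nonneg hh0
      filter_upwards [e0, e2, e3, hclosed t] with ω h0 h2 h3 hcl
      refine max_le ?_ h3
      rw [hcl]
      rw [h0] at h2
      simp only [Pi.sub_apply, e0'] at h2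
      exact h2
    have key : ∀ y' : ℝ, K < y' → y' < y → (ℙ A).toReal ≤ callFn μ K / (y' - K) := by
      intro y' hKy' hy'y
      have hcpos : (0:ℝ) < y' - K := by linarith
      have hcond' : ∀ t : ℝ≥0, ∀ᵐ ω ∂ℙ, y' < P t ω → y' - K ≤ (ℙ[h | 𝒢 t]) ω := by
        intro t
        filter_upwards [hcond t] with ω hω hyω
        refine le_trans ?_ hω
        calc y' - K ≤ P t ω - K := by linarith
        _ ≤ max (P t ω - K) 0 := le_max_left _ _
      obtain ⟨D, hDc, hDd⟩ := TopologicalSpace.exists_countable_dense ℝ≥0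
      obtain ⟨e, hDe⟩ := hDc.exists_eq_range hDd.nonempty
      have hincl : A ⊆ ⋃ n : ℕ, {ω | y' < P (e n) ω} := by
        intro ω hω
        have hex : ∃ t : ℝ≥0, y' < P t ω := by
          by_contra hc
          push_neg at hc
          have : (⨆ t : ℝ≥0, P t ω) ≤ y' := ciSup_le hc
          have hωA : y ≤ ⨆ t : ℝ≥0, P t ω := hω
          linarith
        obtain ⟨t, ht⟩ := hex
        have hmem : {s : ℝ≥0 | P s ω ∈ Ioi y'} ∈ 𝓝[≥] t := (hrc ω t) (Ioi_mem_nhds ht)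
        rw [mem_nhdsGE_iff_exists_Ico_subset] at hmem
        obtain ⟨u, hu, hsub⟩ := hmem
        obtain ⟨q, hqD, hq⟩ := hDd.exists_mem_open isOpen_Ioo (nonempty_Ioo.2 hu)
        have : q ∈ range e := hDe ▸ hqD
        obtain ⟨n, rfl⟩ := this
        exact mem_iUnion.2 ⟨n, hsub ⟨hq.1.le, hq.2⟩⟩
      set U : ℕ → Set Ω := fun n =>
        ⋃ t ∈ Finset.image e (Finset.range (n+1)), {ω | y' < P t ω} with hU
      have hUmono : Monotone U := by
        intro a b hab
        exact Set.biUnion_subset_biUnion_left (Finset.coe_subset.2 (Finset.image_subset_image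
          (Finset.range_subset_range.2 (by omega))))
      have hUU : (⋃ n : ℕ, {ω | y' < P (e n) ω}) ⊆ ⋃ n, U n := by
        refine iUnion_subset fun n => subset_iUnion_of_subset n ?_
        intro ω hω
        exact mem_iUnion₂.2 ⟨e n, Finset.mem_image_of_mem e (Finset.self_mem_range_succ n), hω⟩
      have hmeasU : ℙ (⋃ n, U n) = ⨆ n, ℙ (U n) := hUmono.directed_le.measure_iUnion
      have hUbound : ∀ n, ℙ (U n) ≤ ENNReal.ofReal (callFn μ K / (y' - K)) := by
        intro n
        have hfs := finite_step 𝒢 P hmart.stronglyAdapted h hint hh0 y' (y' - K) hcpos.le hcond'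
          (Finset.image e (Finset.range (n+1)))
        rw [hcall] at hfs
        rw [ENNReal.le_ofReal_iff_toReal_le (measure_ne_top ℙ _)
          (div_nonneg (callFn_nonneg μ K) hcpos.le), le_div_iff₀ hcpos]
        calc (ℙ (U n)).toReal * (y' - K) = (y' - K) * (ℙ (U n)).toReal := mul_comm _ _
        _ ≤ callFn μ K := hfs
      have hAle : ℙ A ≤ ENNReal.ofReal (callFn μ K / (y' - K)) := by
        refine le_trans (measure_mono (hincl.trans hUU)) ?_
        rw [hmeasU]
        exact iSup_le hUbound
      calc (ℙ A).toReal ≤ (ENNReal.ofReal (callFn μ K / (y' - K))).toReal :=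
            ENNReal.toReal_mono ENNReal.ofReal_ne_top hAle
      _ = callFn μ K / (y' - K) :=
            ENNReal.toReal_ofReal (div_nonneg (callFn_nonneg μ K) hcpos.le)
    set p := (ℙ A).toReal with hp
    have hp0 : 0 ≤ p := ENNReal.toReal_nonneg
    rw [le_div_iff₀ (by linarith : (0:ℝ) < y - K)]
    refine le_of_forall_pos_le_add (fun δ hδ => ?_)
    set d := min ((y - K)/2) (δ/(p+1)) with hd
    have hmin1 : d ≤ (y - K)/2 := min_le_left _ _
    have hmin2 : d ≤ δ/(p+1) := min_le_right _ _
    have hminpos : 0 < d := lt_min (by linarith) (by positivity)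
    have hK' : K < y - d := by linarith
    have h2 : y - d < y := by linarith
    have hkey := key (y - d) hK' h2
    rw [le_div_iff₀ (by linarith : (0:ℝ) < y - d - K)] at hkey
    have hp1 : p * d ≤ δ := by
      calc p * d ≤ p * (δ/(p+1)) := mul_le_mul_of_nonneg_left hmin2 hp0
      _ ≤ δ := by
          rw [mul_div_assoc']
          rw [div_le_iff₀ (by positivity : (0:ℝ) < p + 1)]
          nlinarith
    nlinarith
  have hple : (ℙ A).toReal ≤ ⨅ K : Iio y, callFn μ (K:ℝ)/(y - (K:ℝ)) :=
    le_ciInf fun K => hmain K.1 (mem_Iio.1 K.2)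
  calc ℙ A = ENNReal.ofReal (ℙ A).toReal := (ENNReal.ofReal_toReal (measure_ne_top ℙ _)).symm
  _ ≤ _ := ENNReal.ofReal_le_ofReal hple
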